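/- For all integers m ≥ 1 with m ≠ 2 and n ≥ 3, the lexicographic product P_m[P_n] of the paths of orders m and n has distinguishing index D'(P_m[P_n]) = 2. -/

import Mathlib

open SimpleGraph

/-- The lexicographic product of two simple graphs. -/
def lexProd {V W : Type*} (G : SimpleGraph V) (H : SimpleGraph W) :
    SimpleGraph (V × W) where
  Adj p q := G.Adj p.1 q.1 ∨ (p.1 = q.1 ∧ H.Adj p.2 q.2)
  symm := by
    constructor
    rintro p q (h | ⟨h1, h2⟩)
    · exact Or.inl h.symm
    · exact Or.inr ⟨h1.symm, h2.symm⟩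
  loopless := by
    constructor
    rintro p (h | ⟨_, h⟩)
    · exact G.irrefl h
    · exact H.irrefl h

/-- The distinguishing number: the least `d` such that there is a vertex labeling with `d`
labels preserved only by the identity automorphism. -/
noncomputable def distinguishingNumber {V : Type*} (G : SimpleGraph V) : ℕ :=
  sInf {d : ℕ | ∃ φ : V → Fin d,
    ∀ σ : G ≃g G, (∀ v, φ (σ v) = φ v) → ∀ v, σ v = v}

/-- The distinguishing index: the least `d` such that there is an edge labeling with `d`
labels preserved only by the identity automorphism. -/
noncomputable def distinguishingIndex {V : Type*} (G : SimpleGraph V) : ℕ :=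
  sInf {d : ℕ | ∃ ψ : G.edgeSet → Fin d,
    ∀ σ : G ≃g G, (∀ e, ψ (σ.mapEdgeSet e) = ψ e) → ∀ v, σ v = v}

/-- Every automorphism of `G[H]` is of wreath form, i.e. `Aut(G[H]) = Aut(G)[Aut(H)]`. -/
def wreathForm {V W : Type*} (G : SimpleGraph V) (H : SimpleGraph W) : Prop :=
  ∀ f : lexProd G H ≃g lexProd G H,
    ∃ (α : G ≃g G) (β : V → (H ≃g H)),
      ∀ p : V × W, f p = (α p.1, β (α p.1) p.2)

/-! ### Auxiliary material -/

lemma lexProd_adj {V W : Type*} (G : SimpleGraph V) (H : SimpleGraph W) (p q : V × W) :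
    (lexProd G H).Adj p q ↔ G.Adj p.1 q.1 ∨ (p.1 = q.1 ∧ H.Adj p.2 q.2) := Iff.rfl

instance pathGraphAdjDec (n : ℕ) : DecidableRel (pathGraph n).Adj :=
  fun _ _ => decidable_of_iff _ pathGraph_adj.symm

instance lexProdAdjDec {V W : Type*} [DecidableEq V] (G : SimpleGraph V) (H : SimpleGraph W)
    [DecidableRel G.Adj] [DecidableRel H.Adj] : DecidableRel (lexProd G H).Adj :=
  fun p q => inferInstanceAs (Decidable (G.Adj p.1 q.1 ∨ (p.1 = q.1 ∧ H.Adj p.2 q.2)))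

lemma iso_degree {V : Type*} [Fintype V] [DecidableEq V] (G : SimpleGraph V)
    [DecidableRel G.Adj] (σ : G ≃g G) (v : V) : G.degree (σ v) = G.degree v := by
  rw [← card_neighborFinset_eq_degree, ← card_neighborFinset_eq_degree]
  have h : G.neighborFinset (σ v) = (G.neighborFinset v).image σ := by
    ext w
    simp only [mem_neighborFinset, Finset.mem_image]
    constructor
    · intro h
      refine ⟨σ.symm w, ?_, σ.apply_symm_apply w⟩
      rw [← σ.apply_symm_apply w] at h
      exact σ.map_adj_iff.mp h
    · rintro ⟨u, hu, rfl⟩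
      exact σ.map_adj_iff.mpr hu
  rw [h, Finset.card_image_of_injective _ σ.injective]

lemma lexProd_neighborFinset {V W : Type*} [Fintype V] [Fintype W] [DecidableEq V]
    [DecidableEq W] (G : SimpleGraph V) (H : SimpleGraph W)
    [DecidableRel G.Adj] [DecidableRel H.Adj] (p : V × W) :
    (lexProd G H).neighborFinset p =
      (G.neighborFinset p.1 ×ˢ Finset.univ) ∪ ({p.1} ×ˢ H.neighborFinset p.2) := by
  ext ⟨b, y⟩
  simp only [mem_neighborFinset, Finset.mem_union, Finset.mem_product, Finset.mem_univ,
    Finset.mem_singleton, and_true, lexProd_adj]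
  constructor
  · rintro (h | ⟨h1, h2⟩)
    · exact Or.inl h
    · exact Or.inr ⟨h1.symm, h2⟩
  · rintro (h | ⟨h1, h2⟩)
    · exact Or.inl h
    · exact Or.inr ⟨h1.symm, h2⟩

lemma lexProd_degree {V W : Type*} [Fintype V] [Fintype W] [DecidableEq V]
    [DecidableEq W] (G : SimpleGraph V) (H : SimpleGraph W)
    [DecidableRel G.Adj] [DecidableRel H.Adj] (p : V × W) :
    (lexProd G H).degree p = G.degree p.1 * Fintype.card W + H.degree p.2 := by
  rw [← card_neighborFinset_eq_degree, lexProd_neighborFinset,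
    Finset.card_union_of_disjoint, Finset.card_product, Finset.card_product]
  · simp [← card_neighborFinset_eq_degree]
  · rw [Finset.disjoint_left]
    rintro ⟨b, y⟩ hb hb'
    simp only [Finset.mem_product, Finset.mem_singleton, mem_neighborFinset] at hb hb'
    exact G.ne_of_adj hb.1 hb'.1.symm

lemma pg_degree_zero {n : ℕ} (hn : 2 ≤ n) (h0 : 0 < n) :
    (pathGraph n).degree ⟨0, h0⟩ = 1 := by
  rw [← card_neighborFinset_eq_degree]
  have h : (pathGraph n).neighborFinset ⟨0, h0⟩ = {⟨1, by omega⟩} := by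
    ext y
    simp only [mem_neighborFinset, Finset.mem_singleton, pathGraph_adj, Fin.ext_iff]
    omega
  rw [h, Finset.card_singleton]

lemma pg_degree_one {n : ℕ} (hn : 3 ≤ n) (h1 : 1 < n) :
    (pathGraph n).degree ⟨1, h1⟩ = 2 := by
  rw [← card_neighborFinset_eq_degree]
  have h : (pathGraph n).neighborFinset ⟨1, h1⟩ = {⟨0, by omega⟩, ⟨2, by omega⟩} := by
    ext y
    simp only [mem_neighborFinset, Finset.mem_insert, Finset.mem_singleton, pathGraph_adj,
      Fin.ext_iff]
    omega
  rw [h]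
  rw [Finset.card_insert_of_notMem (by simp [Fin.ext_iff]), Finset.card_singleton]

lemma pg_degree_pos {n : ℕ} (hn : 2 ≤ n) (r : Fin n) : 1 ≤ (pathGraph n).degree r := by
  rw [← card_neighborFinset_eq_degree]
  rw [Nat.succ_le_iff, Finset.card_pos]
  by_cases h : r.val + 1 < n
  · exact ⟨⟨r.val + 1, h⟩, by simp [mem_neighborFinset, pathGraph_adj]⟩
  · refine ⟨⟨r.val - 1, by omega⟩, ?_⟩
    have := r.isLt
    simp only [mem_neighborFinset, pathGraph_adj]
    omega

lemma pg_degree_le {n : ℕ} (r : Fin n) : (pathGraph n).degree r ≤ 2 := by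
  rw [← card_neighborFinset_eq_degree]
  have h : ((pathGraph n).neighborFinset r).card ≤
      ({r.val - 1, r.val + 1} : Finset ℕ).card := by
    apply Finset.card_le_card_of_injOn Fin.val
    · intro y hy
      simp only [Finset.mem_coe, mem_neighborFinset, pathGraph_adj] at hy
      simp only [Finset.mem_coe, Finset.mem_insert, Finset.mem_singleton]
      omega
    · exact Fin.val_injective.injOn
  calc ((pathGraph n).neighborFinset r).card ≤ _ := h
    _ ≤ 2 := by
        apply le_trans (Finset.card_insert_le _ _)
        simp

lemma pg_adj_rev {n : ℕ} (x y : Fin n) :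
    (pathGraph n).Adj x.rev y.rev ↔ (pathGraph n).Adj x y := by
  rw [pathGraph_adj, pathGraph_adj, Fin.val_rev, Fin.val_rev]
  have := x.isLt
  have := y.isLt
  omega

lemma deg_cancel {u v r1 x1 N : ℕ} (hN : 3 ≤ N) (hr : 1 ≤ r1) (hr2 : r1 ≤ 2)
    (hx : 1 ≤ x1) (hx2 : x1 ≤ 2) (h : u * N + r1 = v * N + x1) : r1 = x1 := by
  rcases Nat.lt_trichotomy u v with h' | h' | h'
  · have h2 : u * N + N ≤ v * N := by
      calc u * N + N = (u + 1) * N := (Nat.succ_mul u N).symm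
        _ ≤ v * N := Nat.mul_le_mul_right N h'
    omega
  · subst h'; omega
  · have h2 : v * N + N ≤ u * N := by
      calc v * N + N = (v + 1) * N := (Nat.succ_mul v N).symm
        _ ≤ u * N := Nat.mul_le_mul_right N h'
    omega

/-- The reversal automorphism of `P_m[P_n]` acting on the second coordinate. -/
def revIso (m n : ℕ) :
    lexProd (pathGraph m) (pathGraph n) ≃g lexProd (pathGraph m) (pathGraph n) where
  toEquiv := Equiv.prodCongr (Equiv.refl (Fin m)) Fin.revPerm
  map_rel_iff' := by
    intro p q
    show (lexProd (pathGraph m) (pathGraph n)).Adj (p.1, p.2.rev) (q.1, q.2.rev) ↔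
      (lexProd (pathGraph m) (pathGraph n)).Adj p q
    rw [lexProd_adj, lexProd_adj]
    simp only [pg_adj_rev]

/-- The distinguishing edge labeling. -/
def lab (m n : ℕ) (p q : Fin m × Fin n) : Fin 2 :=
  if p.1 = q.1 then (if p.1.val = 0 ∧ (p.2.val = 0 ∨ q.2.val = 0) then 1 else 0)
  else (if p.2 = q.2 then 1 else 0)

lemma lab_symm (m n : ℕ) (p q : Fin m × Fin n) : lab m n p q = lab m n q p := by
  unfold lab
  by_cases h : p.1 = q.1
  · rw [if_pos h, if_pos h.symm, h]
    by_cases h2 : q.1.val = 0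
    · simp [h2, or_comm]
    · simp [h2]
  · rw [if_neg h, if_neg (fun hh : q.1 = p.1 => h hh.symm)]
    by_cases h2 : p.2 = q.2
    · rw [if_pos h2, if_pos h2.symm]
    · rw [if_neg h2, if_neg (fun hh : q.2 = p.2 => h2 hh.symm)]

lemma lab_cross (m n : ℕ) (p q : Fin m × Fin n) (h : p.1 ≠ q.1) :
    lab m n p q = if p.2 = q.2 then 1 else 0 := by
  unfold lab; rw [if_neg h]

lemma lab_intra (m n : ℕ) (p q : Fin m × Fin n) (h : p.1 = q.1) :
    lab m n p q = if p.1.val = 0 ∧ (p.2.val = 0 ∨ q.2.val = 0) then 1 else 0 := by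
  unfold lab; rw [if_pos h]

set_option maxHeartbeats 1000000 in
theorem stmt8 (m n : ℕ) (hm : 1 ≤ m) (hm2 : m ≠ 2) (hn : 3 ≤ n) :
    distinguishingIndex (lexProd (SimpleGraph.pathGraph m) (SimpleGraph.pathGraph n)) = 2 := by
  have hm0 : 0 < m := hm
  have hn0 : 0 < n := by omega
  have hn1 : 1 < n := by omega
  have hadj01 : (lexProd (pathGraph m) (pathGraph n)).Adj
      ((⟨0, hm0⟩ : Fin m), (⟨0, hn0⟩ : Fin n)) ((⟨0, hm0⟩ : Fin m), (⟨1, hn1⟩ : Fin n)) :=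
    Or.inr ⟨rfl, pathGraph_adj.mpr (Or.inl rfl)⟩
  have h2mem : (2 : ℕ) ∈ {d : ℕ | ∃ ψ : (lexProd (pathGraph m) (pathGraph n)).edgeSet → Fin d,
      ∀ σ : lexProd (pathGraph m) (pathGraph n) ≃g lexProd (pathGraph m) (pathGraph n),
        (∀ e, ψ (σ.mapEdgeSet e) = ψ e) → ∀ v, σ v = v} := by
    refine ⟨fun e => Sym2.lift ⟨lab m n, lab_symm m n⟩ e.val, ?_⟩
    intro σ hpres
    have hlab : ∀ p q, (lexProd (pathGraph m) (pathGraph n)).Adj p q →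
        lab m n (σ p) (σ q) = lab m n p q := by
      intro p q h
      have h2 := hpres ⟨s(p, q), h⟩
      simpa [Iso.mapEdgeSet, Hom.mapEdgeSet, Sym2.map_pair_eq] using h2
    have hHdeg : ∀ v : Fin m × Fin n,
        (pathGraph n).degree (σ v).2 = (pathGraph n).degree v.2 := by
      intro v
      have h1 := iso_degree _ σ v
      rw [lexProd_degree, lexProd_degree, Fintype.card_fin] at h1
      exact deg_cancel hn (pg_degree_pos (by omega) _) (pg_degree_le _)
        (pg_degree_pos (by omega) _) (pg_degree_le _) h1
    have hd0 : (pathGraph n).degree (σ ((⟨0, hm0⟩ : Fin m), (⟨0, hn0⟩ : Fin n))).2 = 1 := by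
      rw [hHdeg]; exact pg_degree_zero (by omega) hn0
    have hd1 : (pathGraph n).degree (σ ((⟨0, hm0⟩ : Fin m), (⟨1, hn1⟩ : Fin n))).2 = 2 := by
      rw [hHdeg]; exact pg_degree_one hn hn1
    have hl01 : lab m n (σ ((⟨0, hm0⟩ : Fin m), (⟨0, hn0⟩ : Fin n)))
        (σ ((⟨0, hm0⟩ : Fin m), (⟨1, hn1⟩ : Fin n))) = 1 := by
      rw [hlab _ _ hadj01, lab_intra m n ((⟨0, hm0⟩ : Fin m), (⟨0, hn0⟩ : Fin n))
        ((⟨0, hm0⟩ : Fin m), (⟨1, hn1⟩ : Fin n)) rfl]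
      simp
    have hfix01 : σ ((⟨0, hm0⟩ : Fin m), (⟨0, hn0⟩ : Fin n)) = ((⟨0, hm0⟩ : Fin m), (⟨0, hn0⟩ : Fin n)) ∧
        σ ((⟨0, hm0⟩ : Fin m), (⟨1, hn1⟩ : Fin n)) = ((⟨0, hm0⟩ : Fin m), (⟨1, hn1⟩ : Fin n)) := by
      by_cases hcc : (σ ((⟨0, hm0⟩ : Fin m), (⟨0, hn0⟩ : Fin n))).1 =
          (σ ((⟨0, hm0⟩ : Fin m), (⟨1, hn1⟩ : Fin n))).1
      · rw [lab_intra _ _ _ _ hcc] at hl01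
        by_cases hcond : (σ ((⟨0, hm0⟩ : Fin m), (⟨0, hn0⟩ : Fin n))).1.val = 0 ∧
            ((σ ((⟨0, hm0⟩ : Fin m), (⟨0, hn0⟩ : Fin n))).2.val = 0 ∨
             (σ ((⟨0, hm0⟩ : Fin m), (⟨1, hn1⟩ : Fin n))).2.val = 0)
        · obtain ⟨hc1, hc2⟩ := hcond
          have hc2' : (σ ((⟨0, hm0⟩ : Fin m), (⟨0, hn0⟩ : Fin n))).2.val = 0 := by
            rcases hc2 with h | h
            · exact h
            · exfalso
              have hd2 : (σ ((⟨0, hm0⟩ : Fin m), (⟨1, hn1⟩ : Fin n))).2 = ⟨0, hn0⟩ := Fin.ext h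
              rw [hd2, pg_degree_zero (by omega) hn0] at hd1
              omega
          have hfa : σ ((⟨0, hm0⟩ : Fin m), (⟨0, hn0⟩ : Fin n)) = ((⟨0, hm0⟩ : Fin m), (⟨0, hn0⟩ : Fin n)) := by
            apply Prod.ext
            · exact Fin.ext hc1
            · exact Fin.ext hc2'
          refine ⟨hfa, ?_⟩
          have hadj' := σ.map_adj_iff.mpr hadj01
          rw [hfa] at hadj'
          rcases hadj' with hG | ⟨_, hH⟩
          · exfalso
            rw [← hfa] at hG
            -- hG : G.Adj (σ (0,0)).1 (σ (0,1)).1 but hcc says they are equal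
            rw [hcc] at hG
            exact (pathGraph m).irrefl hG
          · rw [pathGraph_adj] at hH
            apply Prod.ext
            · rw [← hcc, hfa]
            · apply Fin.ext
              dsimp only at hH ⊢
              omega
        · rw [if_neg hcond] at hl01
          exact absurd hl01 (by decide)
      · rw [lab_cross _ _ _ _ hcc] at hl01
        by_cases h2 : (σ ((⟨0, hm0⟩ : Fin m), (⟨0, hn0⟩ : Fin n))).2 =
            (σ ((⟨0, hm0⟩ : Fin m), (⟨1, hn1⟩ : Fin n))).2
        · exfalso
          rw [h2, hd1] at hd0
          omega
        · rw [if_neg h2] at hl01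
          exact absurd hl01 (by decide)
    have col0 : ∀ j : ℕ, ∀ hj : j < n,
        σ ((⟨0, hm0⟩ : Fin m), (⟨j, hj⟩ : Fin n)) = ((⟨0, hm0⟩ : Fin m), (⟨j, hj⟩ : Fin n)) := by
      intro j
      induction j using Nat.strong_induction_on with
      | _ j IH =>
        match j, IH with
        | 0, _ => intro hj; exact hfix01.1
        | 1, _ => intro hj; exact hfix01.2
        | (j+2), IH =>
          intro hj
          have hA := IH (j+1) (by omega) (by omega)
          have hadjj : (lexProd (pathGraph m) (pathGraph n)).Adj
              ((⟨0, hm0⟩ : Fin m), (⟨j+2, hj⟩ : Fin n)) ((⟨0, hm0⟩ : Fin m), (⟨j+1, by omega⟩ : Fin n)) :=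
            Or.inr ⟨rfl, pathGraph_adj.mpr (Or.inr rfl)⟩
          have hw : (lexProd (pathGraph m) (pathGraph n)).Adj
              (σ ((⟨0, hm0⟩ : Fin m), (⟨j+2, hj⟩ : Fin n))) ((⟨0, hm0⟩ : Fin m), (⟨j+1, by omega⟩ : Fin n)) := by
            have h3 := σ.map_adj_iff.mpr hadjj
            rwa [hA] at h3
          rcases hw with hG | ⟨hEq, hH⟩
          · exfalso
            have hadj00 : (lexProd (pathGraph m) (pathGraph n)).Adj
                (σ ((⟨0, hm0⟩ : Fin m), (⟨j+2, hj⟩ : Fin n))) (σ ((⟨0, hm0⟩ : Fin m), (⟨0, hn0⟩ : Fin n))) := by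
              rw [hfix01.1]; exact Or.inl hG
            have h4 := σ.map_adj_iff.mp hadj00
            rcases h4 with hG' | ⟨_, hH'⟩
            · exact (pathGraph m).irrefl hG'
            · rw [pathGraph_adj] at hH'
              dsimp only at hH'
              omega
          · rw [pathGraph_adj] at hH
            dsimp only at hH
            rcases hH with h' | h'
            · exfalso
              have hB := IH j (by omega) (by omega)
              have h5 : σ ((⟨0, hm0⟩ : Fin m), (⟨j, by omega⟩ : Fin n)) =
                  σ ((⟨0, hm0⟩ : Fin m), (⟨j+2, hj⟩ : Fin n)) := by
                rw [hB]
                refine (Prod.ext ?_ ?_).symm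
                · exact hEq
                · apply Fin.ext
                  dsimp only
                  omega
              have h6 := σ.injective h5
              rw [Prod.ext_iff, Fin.ext_iff, Fin.ext_iff] at h6
              dsimp only at h6
              omega
            · apply Prod.ext
              · exact hEq
              · apply Fin.ext
                dsimp only
                omega
    have allfix : ∀ k : ℕ, ∀ hk : k < m, ∀ x : Fin n,
        σ ((⟨k, hk⟩ : Fin m), x) = ((⟨k, hk⟩ : Fin m), x) := by
      intro k
      induction k using Nat.strong_induction_on with
      | _ k IH =>
        match k, IH with
        | 0, _ =>
          intro hk x
          exact col0 x.val x.isLt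
        | (k+1), IH =>
          intro hk x
          have hfixk : ∀ w : Fin m × Fin n, w.1.val ≤ k → σ w = w := by
            intro w hw
            exact IH w.1.val (by omega) w.1.isLt w.2
          have hqfix : σ ((⟨k, by omega⟩ : Fin m), (⟨0, hn0⟩ : Fin n)) =
              ((⟨k, by omega⟩ : Fin m), (⟨0, hn0⟩ : Fin n)) :=
            IH k (by omega) (by omega) _
          have hadjpq : (lexProd (pathGraph m) (pathGraph n)).Adj
              ((⟨k+1, hk⟩ : Fin m), x) ((⟨k, by omega⟩ : Fin m), (⟨0, hn0⟩ : Fin n)) :=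
            Or.inl (pathGraph_adj.mpr (Or.inr rfl))
          have hw : (lexProd (pathGraph m) (pathGraph n)).Adj
              (σ ((⟨k+1, hk⟩ : Fin m), x)) ((⟨k, by omega⟩ : Fin m), (⟨0, hn0⟩ : Fin n)) := by
            have h3 := σ.map_adj_iff.mpr hadjpq
            rwa [hqfix] at h3
          have hloop : ∀ hcl : (σ ((⟨k+1, hk⟩ : Fin m), x)).1.val ≤ k, False := by
            intro hcl
            have h4 := hfixk _ hcl
            have h5 := σ.injective h4
            have h6 := congrArg (fun z => (Prod.fst z).val) h5
            dsimp only at h6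
            omega
          have hcol : (σ ((⟨k+1, hk⟩ : Fin m), x)).1.val = k + 1 := by
            rcases hw with hG | ⟨hEq, _⟩
            · rw [pathGraph_adj] at hG
              dsimp only at hG
              rcases hG with h' | h'
              · exact ((hloop (by omega)).elim)
              · omega
            · exfalso
              apply hloop
              have := congrArg Fin.val hEq
              dsimp only at this
              omega
          have hkm : k < m := by omega
          have hadjpq' : (lexProd (pathGraph m) (pathGraph n)).Adj
              ((⟨k+1, hk⟩ : Fin m), x) ((⟨k, hkm⟩ : Fin m), x) :=
            Or.inl (pathGraph_adj.mpr (Or.inr rfl))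
          have hl := hlab _ _ hadjpq'
          rw [IH k (by omega) hkm x] at hl
          have hne1 : (σ ((⟨k+1, hk⟩ : Fin m), x)).1 ≠ (⟨k, hkm⟩ : Fin m) := by
            intro hh
            have h10 := congrArg Fin.val hh
            dsimp only at h10
            omega
          have hne2 : (⟨k+1, hk⟩ : Fin m) ≠ (⟨k, hkm⟩ : Fin m) := by
            intro hh
            have h10 := congrArg Fin.val hh
            dsimp only at h10
            omega
          rw [lab_cross m n (σ ((⟨k+1, hk⟩ : Fin m), x)) ((⟨k, hkm⟩ : Fin m), x) hne1,
            lab_cross m n ((⟨k+1, hk⟩ : Fin m), x) ((⟨k, hkm⟩ : Fin m), x) hne2] at hl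
          by_cases h2 : (σ ((⟨k+1, hk⟩ : Fin m), x)).2 =
              (((⟨k, hkm⟩ : Fin m), x) : Fin m × Fin n).2
          · refine Prod.ext ?_ h2
            apply Fin.ext
            dsimp only
            omega
          · exfalso
            rw [if_neg h2,
              if_pos (show (((⟨k+1, hk⟩ : Fin m), x) : Fin m × Fin n).2 =
                (((⟨k, hkm⟩ : Fin m), x) : Fin m × Fin n).2 from rfl)] at hl
            exact absurd hl (by decide)
    intro v
    exact allfix v.1.val v.1.isLt v.2
  have hedge : s((((⟨0, hm0⟩ : Fin m), (⟨0, hn0⟩ : Fin n)) : Fin m × Fin n),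
      (((⟨0, hm0⟩ : Fin m), (⟨1, hn1⟩ : Fin n)) : Fin m × Fin n)) ∈
      (lexProd (pathGraph m) (pathGraph n)).edgeSet :=
    ((lexProd (pathGraph m) (pathGraph n)).mem_edgeSet).mpr hadj01
  unfold distinguishingIndex
  refine le_antisymm (Nat.sInf_le h2mem) (le_csInf ⟨2, h2mem⟩ ?_)
  intro b hb
  by_contra hlt
  push_neg at hlt
  interval_cases b
  · obtain ⟨ψ0, -⟩ := hb
    exact (ψ0 ⟨_, hedge⟩).elim0
  · obtain ⟨ψ1, h1⟩ := hb
    have hrev := h1 (revIso m n) (fun e => Subsingleton.elim _ _)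
      (((⟨0, hm0⟩ : Fin m), (⟨0, hn0⟩ : Fin n)) : Fin m × Fin n)
    have h8 : ((⟨0, hn0⟩ : Fin n)).rev = (⟨0, hn0⟩ : Fin n) := congrArg Prod.snd hrev
    have h9 := congrArg Fin.val h8
    rw [Fin.val_rev] at h9
    dsimp only at h9
    omega
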